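/- arXiv:2202.00305 — 2 statements merged into one kernel-verified Lean document; each statement's English description precedes it below -/
import Mathlib

section
/- Let G be a Lie algebra, θ : G → V an isomorphism of right G-modules where V is a right G-module, and let L = G ⋉ V be the associated Leibniz algebra. Suppose Δ : L → L is a local derivation with Δ(L) ⊆ V, where every derivation of L has the form R_a + ωθ + λπ with π : V → V the identity G-module endomorphism scaled (i.e., derivations mapping into V are of the form x + v ↦ ωθ(x) + λv). Then Δ itself has the form Δ(x+v) = ωθ(x) + λv for fixed scalars ω, λ, and hence Δ is a derivation. -/
/-- A linear map sending every vector to a scalar multiple of itself is a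
global scalar multiple of the identity. -/
lemma eigen_scalar_aux {F M : Type*} [Field F] [AddCommGroup M] [Module F M]
    (u : M →ₗ[F] M) (h : ∀ x : M, ∃ c : F, u x = c • x) :
    ∃ c : F, ∀ x : M, u x = c • x := by
  by_cases hM : ∀ x : M, x = 0
  · exact ⟨0, fun x => by rw [hM x]; simp⟩
  · push_neg at hM
    obtain ⟨x₀, hx₀⟩ := hM
    obtain ⟨c₀, hc₀⟩ := h x₀
    refine ⟨c₀, fun x => ?_⟩
    by_cases hdep : ∃ t : F, x = t • x₀
    · obtain ⟨t, rfl⟩ := hdep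
      rw [map_smul, hc₀, smul_comm]
    · obtain ⟨cx, hcx⟩ := h x
      obtain ⟨cs, hcs⟩ := h (x + x₀)
      rw [map_add, hcx, hc₀, smul_add] at hcs
      have key : (cx - cs) • x = (cs - c₀) • x₀ := by
        rw [sub_smul, sub_smul]
        rw [sub_eq_sub_iff_add_eq_add, hcs, add_comm]
      by_cases hne : cx = cs
      · rw [hne, sub_self, zero_smul] at key
        have : cs - c₀ = 0 := by
          rcases smul_eq_zero.mp key.symm with h' | h'
          · exact h'
          · exact absurd h' hx₀
        have hcs0 : cs = c₀ := sub_eq_zero.mp this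
        rw [hcx, hne, hcs0]
      · exfalso
        apply hdep
        refine ⟨(cx - cs)⁻¹ * (cs - c₀), ?_⟩
        have h1 : x = (cx - cs)⁻¹ • ((cx - cs) • x) := by
          rw [smul_smul, inv_mul_cancel₀ (sub_ne_zero.mpr hne), one_smul]
        rw [h1, key, smul_smul]


/-- Let `L = G ⋉ V` with `θ : G → V` an isomorphism of right `G`-modules, and
suppose every derivation of `L` mapping `L` into `V` has the form
`x + v ↦ ω θ(x) + λ v`.  If `Δ` is a local derivation of `L` with `Δ(L) ⊆ V`,
then `Δ` itself has the form `Δ(x + v) = ω θ(x) + λ v` for fixed scalars `ω, λ`,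
and hence `Δ` is a derivation. -/
theorem local_derivation_into_module_isomorphic_case (F : Type*) [Field F]
    (G : Type*) [LieRing G] [LieAlgebra F G] (V : Type*) [AddCommGroup V] [Module F V]
    (ρ : V →ₗ[F] G →ₗ[F] V)
    (hmod : ∀ (v : V) (g h : G), ρ v ⁅g, h⁆ = ρ (ρ v g) h - ρ (ρ v h) g)
    (θ : G ≃ₗ[F] V) (hθ : ∀ x y : G, θ ⁅x, y⁆ = ρ (θ x) y)
    (B : G × V → G × V → G × V)
    (hB : ∀ p q : G × V, B p q = (⁅p.1, q.1⁆, ρ p.2 q.1))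
    (hder : ∀ D : G × V →ₗ[F] G × V,
      (∀ a b : G × V, D (B a b) = B (D a) b + B a (D b)) → (∀ x : G × V, (D x).1 = 0) →
      ∃ ω lam : F, ∀ (g : G) (v : V), D (g, v) = ((0 : G), ω • θ g + lam • v))
    (Δ : G × V →ₗ[F] G × V)
    (hloc : ∀ x : G × V, ∃ D : G × V →ₗ[F] G × V,
      (∀ a b : G × V, D (B a b) = B (D a) b + B a (D b)) ∧ Δ x = D x)
    (hrange : ∀ x : G × V, (Δ x).1 = 0) :
    (∃ ω lam : F, ∀ (g : G) (v : V), Δ (g, v) = ((0 : G), ω • θ g + lam • v)) ∧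
      ∀ a b : G × V, Δ (B a b) = B (Δ a) b + B a (Δ b) := by
  classical
  -- For every derivation `D` of `L`, extract structure constants.
  have main : ∀ D : G × V →ₗ[F] G × V,
      (∀ a b : G × V, D (B a b) = B (D a) b + B a (D b)) →
      ∃ ωP lamP lamN : F,
        (∀ g : G, (D (g, 0)).2 = ωP • θ g) ∧
        (∀ v : V, (D (0, v)).1 = lamN • θ.symm v) ∧
        (∀ v : V, (D (0, v)).2 = lamP • v + θ ((D (θ.symm v, 0)).1)) := by
    intro D hD
    -- basic Leibniz consequences
    have e1 : ∀ x y : G, D (⁅x, y⁆, 0)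
        = (⁅(D (x, 0)).1, y⁆ + ⁅x, (D (y, 0)).1⁆, ρ ((D (x, 0)).2) y) := by
      intro x y
      have h := hD (x, 0) (y, 0)
      rw [hB, hB, hB] at h
      simpa using h
    have e2 : ∀ (v : V) (y : G), D (0, ρ v y)
        = (⁅(D (0, v)).1, y⁆, ρ ((D (0, v)).2) y + ρ v ((D (y, 0)).1)) := by
      intro v y
      have h := hD (0, v) (y, 0)
      rw [hB, hB, hB] at h
      simpa using h
    set fst' := LinearMap.fst F G V
    set snd' := LinearMap.snd F G V
    set inl' := LinearMap.inl F G V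
    set inr' := LinearMap.inr F G V
    -- the derivation N
    set N : G × V →ₗ[F] G × V :=
      inr' ∘ₗ (θ.toLinearMap ∘ₗ (fst' ∘ₗ (D ∘ₗ (inr' ∘ₗ snd')))) with hN
    have Napp : ∀ p : G × V, N p = ((0 : G), θ ((D (0, p.2)).1)) := by
      intro p; rfl
    have Nleib : ∀ a b : G × V, N (B a b) = B (N a) b + B a (N b) := by
      intro a b
      rw [Napp, Napp, Napp, hB, hB, hB]
      have h2 : (D (0, ρ a.2 b.1)).1 = ⁅(D (0, a.2)).1, b.1⁆ := by rw [e2]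
      simp [h2, hθ]
    have Nrange : ∀ x : G × V, (N x).1 = 0 := by intro x; rw [Napp]
    obtain ⟨ωN, lamN, hNform⟩ := hder N Nleib Nrange
    have S2 : ∀ v : V, (D (0, v)).1 = lamN • θ.symm v := by
      intro v
      have h := hNform 0 v
      rw [Napp] at h
      have h2 : θ ((D (0, v)).1) = lamN • v := by
        have := congrArg Prod.snd h
        simpa using this
      have := congrArg θ.symm h2
      simpa using this
    -- the derivation P
    set P : G × V →ₗ[F] G × V :=
      inr' ∘ₗ (snd' ∘ₗ D ∘ₗ inl' ∘ₗ fst' + snd' ∘ₗ D ∘ₗ inr' ∘ₗ snd'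
        - θ.toLinearMap ∘ₗ fst' ∘ₗ D ∘ₗ inl' ∘ₗ θ.symm.toLinearMap ∘ₗ snd') with hP
    have Papp : ∀ p : G × V,
        P p = ((0 : G), (D (p.1, 0)).2 + (D (0, p.2)).2 - θ ((D (θ.symm p.2, 0)).1)) := by
      intro p; rfl
    have Pleib : ∀ a b : G × V, P (B a b) = B (P a) b + B a (P b) := by
      intro a b
      rw [Papp, Papp, Papp, hB, hB, hB]
      have t1 : (D (⁅a.1, b.1⁆, 0)).2 = ρ ((D (a.1, 0)).2) b.1 := by rw [e1]
      have t2 : (D (0, ρ a.2 b.1)).2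
          = ρ ((D (0, a.2)).2) b.1 + ρ a.2 ((D (b.1, 0)).1) := by rw [e2]
      have hsymm : θ.symm (ρ a.2 b.1) = ⁅θ.symm a.2, b.1⁆ := by
        have : ρ a.2 b.1 = θ ⁅θ.symm a.2, b.1⁆ := by
          rw [hθ, θ.apply_symm_apply]
        rw [this, θ.symm_apply_apply]
      have t3 : θ ((D (θ.symm (ρ a.2 b.1), 0)).1)
          = ρ (θ ((D (θ.symm a.2, 0)).1)) b.1 + ρ a.2 ((D (b.1, 0)).1) := by
        rw [hsymm]
        have h4 : (D (⁅θ.symm a.2, b.1⁆, 0)).1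
            = ⁅(D (θ.symm a.2, 0)).1, b.1⁆ + ⁅θ.symm a.2, (D (b.1, 0)).1⁆ := by rw [e1]
        rw [h4, map_add, hθ, hθ, θ.apply_symm_apply]
      refine Prod.ext (by simp) ?_
      simp only [t1, t2, t3]
      simp [map_add, map_sub]
      abel
    have Prange : ∀ x : G × V, (P x).1 = 0 := by intro x; rw [Papp]
    obtain ⟨ωP, lamP, hPform⟩ := hder P Pleib Prange
    refine ⟨ωP, lamP, lamN, ?_, S2, ?_⟩
    · intro g
      have h := hPform g 0
      rw [Papp] at h
      have := congrArg Prod.snd h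
      simpa [show D ((0 : G), (0 : V)) = 0 from map_zero D] using this
    · intro v
      have h := hPform 0 v
      rw [Papp] at h
      have h2 := congrArg Prod.snd h
      simp [show D ((0 : G), (0 : V)) = 0 from map_zero D] at h2
      -- h2 : (D (0,v)).2 - θ ((D (θ.symm v, 0)).1) = lamP • v
      rw [sub_eq_iff_eq_add] at h2
      exact h2
  -- Step 1 : Δ on (g,0) is a scalar multiple of θ g.
  have step1 : ∃ ω : F, ∀ g : G, (Δ (g, 0)).2 = ω • θ g := by
    set u : G →ₗ[F] G := θ.symm.toLinearMap ∘ₗ LinearMap.snd F G V ∘ₗ Δ ∘ₗ LinearMap.inl F G V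
      with hu
    have hux : ∀ g, u g = θ.symm ((Δ (g, 0)).2) := by intro g; simp [hu]
    have h : ∀ g : G, ∃ c : F, u g = c • g := by
      intro g
      obtain ⟨D, hD, hDeq⟩ := hloc (g, 0)
      obtain ⟨ωP, lamP, lamN, hS1, _, _⟩ := main D hD
      refine ⟨ωP, ?_⟩
      rw [hux, hDeq, hS1, map_smul, θ.symm_apply_apply]
    obtain ⟨ω, hω⟩ := eigen_scalar_aux u h
    refine ⟨ω, fun g => ?_⟩
    have := hω g
    rw [hux] at this
    have := congrArg θ this
    simpa using this
  obtain ⟨ω, hω⟩ := step1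
  -- Step 2 : Δ on (0,v) is a scalar multiple of v.
  have step2 : ∃ lam : F, ∀ v : V, (Δ (0, v)).2 = lam • v := by
    set u : V →ₗ[F] V := LinearMap.snd F G V ∘ₗ Δ ∘ₗ LinearMap.inr F G V with hu
    have hux : ∀ v, u v = (Δ (0, v)).2 := by intro v; simp [hu]
    have h : ∀ v : V, ∃ c : F, u v = c • v := by
      intro v
      set g : G := θ.symm v with hg
      have hv : θ g = v := θ.apply_symm_apply v
      obtain ⟨D, hD, hDeq⟩ := hloc (g, v)
      obtain ⟨ωP, lamP, lamN, hS1, hS2, hS3⟩ := main D hD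
      have hsplit : (g, (v : V)) = ((g, 0) : G × V) + (0, v) := by simp
      have hadd : D (g, v) = D (g, 0) + D (0, v) := by rw [hsplit, map_add]
      have hfst : (D (g, 0)).1 + lamN • g = 0 := by
        have h0 : (D (g, v)).1 = 0 := by rw [← hDeq]; exact hrange _
        rw [hadd] at h0
        have := hS2 v
        rw [← hg] at this
        simpa [this] using h0
      have hfst' : (D (g, 0)).1 = -(lamN • g) := eq_neg_of_add_eq_zero_left hfst
      refine ⟨ωP + lamP - lamN - ω, ?_⟩
      rw [hux]
      have hΔv : (Δ (0, v)).2 = (D (g, v)).2 - (Δ (g, 0)).2 := by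
        have : Δ (g, v) = Δ (g, 0) + Δ (0, v) := by rw [hsplit, map_add]
        rw [hDeq] at this
        have := congrArg Prod.snd this
        simp at this
        rw [this]; abel
      have hs3 : (D (0, v)).2 = lamP • v + θ ((D (θ.symm v, 0)).1) := hS3 v
      rw [← hg] at hs3
      rw [hΔv, hadd]
      simp only [Prod.snd_add]
      rw [hS1 g, hs3, hfst', hω g, hv]
      simp only [map_neg, map_smul, hv, sub_smul, add_smul]
      abel
    obtain ⟨lam, hlam⟩ := eigen_scalar_aux u h
    exact ⟨lam, fun v => by rw [← hux, hlam]⟩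
  obtain ⟨lam, hlam⟩ := step2
  -- the form of Δ
  have form : ∀ (g : G) (v : V), Δ (g, v) = ((0 : G), ω • θ g + lam • v) := by
    intro g v
    have hsplit : (g, (v : V)) = ((g, 0) : G × V) + (0, v) := by simp
    rw [hsplit, map_add]
    refine Prod.ext ?_ ?_
    · have h1 := hrange ((g, 0) : G × V)
      have h2 := hrange ((0, v) : G × V)
      simp [h1, h2]
    · simp [hω g, hlam v]
  refine ⟨⟨ω, lam, form⟩, ?_⟩
  intro a b
  rw [hB, hB, hB]
  rw [form, form, form]
  refine Prod.ext (by simp) ?_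
  simp [hθ, map_add, map_smul, smul_add]
end

section
/- Let L = S ⋉ V be a Leibniz algebra where S is a Lie algebra acting on the module V, and suppose every derivation of L restricted to S has the form x ↦ [x, a] + (element of V). If Δ is a local derivation of L, then the map x ∈ S ↦ pr_S(Δ(x)) ∈ S is a local derivation of the Lie algebra S. -/
/-- Let `L = S ⋉ V` be a Leibniz algebra, and suppose every derivation of `L`
restricted to `S` has the form `x ↦ [x, a] + (element of V)`.  If `Δ` is a local
derivation of `L`, then `x ↦ pr_S (Δ (x, 0))` is a local derivation of the Lie
algebra `S`. -/
theorem projection_of_local_derivation (F : Type*) [Field F]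
    (S : Type*) [LieRing S] [LieAlgebra F S] (V : Type*) [AddCommGroup V] [Module F V]
    (ρ : V →ₗ[F] S →ₗ[F] V)
    (hmod : ∀ (v : V) (g h : S), ρ v ⁅g, h⁆ = ρ (ρ v g) h - ρ (ρ v h) g)
    (B : S × V → S × V → S × V)
    (hB : ∀ p q : S × V, B p q = (⁅p.1, q.1⁆, ρ p.2 q.1))
    (hres : ∀ D : S × V →ₗ[F] S × V,
      (∀ a b : S × V, D (B a b) = B (D a) b + B a (D b)) →
      ∃ a : S, ∀ x : S, (D (x, (0 : V))).1 = ⁅x, a⁆)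
    (Δ : S × V →ₗ[F] S × V)
    (hloc : ∀ x : S × V, ∃ D : S × V →ₗ[F] S × V,
      (∀ a b : S × V, D (B a b) = B (D a) b + B a (D b)) ∧ Δ x = D x) :
    ∀ x : S, ∃ D : S →ₗ[F] S,
      (∀ a b : S, D ⁅a, b⁆ = ⁅D a, b⁆ + ⁅a, D b⁆) ∧ (Δ (x, (0 : V))).1 = D x := by
  intro x
  obtain ⟨D, hD, hDx⟩ := hloc (x, 0)
  obtain ⟨a, ha⟩ := hres D hD
  refine ⟨-(LieAlgebra.ad F S a), ?_, ?_⟩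
  · intro p q
    simp only [LinearMap.neg_apply, LieAlgebra.ad_apply, neg_lie, lie_neg, ← neg_add]
    rw [leibniz_lie]
  · rw [hDx, ha x]
    simp only [LinearMap.neg_apply, LieAlgebra.ad_apply, ← lie_skew a x, neg_neg]
end
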